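/- arXiv:2404.08863 — 4 statements merged into one kernel-verified Lean document; each statement's English description precedes it below -/
import Mathlib

section
/- Let G be a residually torsion-free nilpotent group, and let x, y ∈ G be elements such that the homomorphism from the free group F₂ on two generators to G sending the two free generators to x and y respectively is injective (so x and y generate a free subgroup of rank 2). Then there exists an element w of the subgroup generated by x and y with w ≠ 1 such that the cyclic subgroups ⟨x⟩ and ⟨w⟩ have disjoint conjugates in G. -/
open scoped commutatorElement

namespace Stmt6Helpers

open Subgroup

universe u

lemma lcs_succ' {G : Type*} [Group G] (n : ℕ) :
    (⊤ : Subgroup G).lowerCentralSeries (n + 1) = ⁅(⊤ : Subgroup G).lowerCentralSeries n, (⊤ : Subgroup G)⁆ := rfl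

lemma isOfFinOrder_of_pow {G : Type*} [Group G] {g : G} {n : ℕ} (hn : 0 < n)
    (h : IsOfFinOrder (g ^ n)) : IsOfFinOrder g := by
  rw [isOfFinOrder_iff_pow_eq_one] at h ⊢
  obtain ⟨k, hk, hk1⟩ := h
  exact ⟨n * k, Nat.mul_pos hn hk, by rw [pow_mul]; exact hk1⟩

lemma gamma_map_surj {G H : Type*} [Group G] [Group H] (f : G →* H)
    (hf : Function.Surjective f) :
    ∀ n, Subgroup.map f ((⊤ : Subgroup G).lowerCentralSeries n) = (⊤ : Subgroup H).lowerCentralSeries n := by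
  intro n
  induction n with
  | zero =>
    rw [Subgroup.lowerCentralSeries_zero, Subgroup.lowerCentralSeries_zero]
    exact Subgroup.map_top_of_surjective f hf
  | succ n ih =>
    rw [lcs_succ', lcs_succ', Subgroup.map_commutator, ih,
      Subgroup.map_top_of_surjective f hf]

lemma gamma_subtype_shift {G : Type*} [Group G] :
    ∀ n, Subgroup.map ((⊤ : Subgroup G).lowerCentralSeries 1).subtype
        ((⊤ : Subgroup ↥((⊤ : Subgroup G).lowerCentralSeries 1)).lowerCentralSeries n) ≤ (⊤ : Subgroup G).lowerCentralSeries (n + 1) := by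
  intro n
  induction n with
  | zero =>
    rw [Subgroup.lowerCentralSeries_zero, ← MonoidHom.range_eq_map, Subgroup.range_subtype]
  | succ n ih =>
    rw [lcs_succ', lcs_succ', Subgroup.map_commutator]
    exact Subgroup.commutator_mono ih le_top

lemma gamma_le_center {G : Type*} [Group G] {c : ℕ}
    (hc : (⊤ : Subgroup G).lowerCentralSeries (c + 1) = ⊥) : (⊤ : Subgroup G).lowerCentralSeries c ≤ center G := by
  intro z hz
  rw [Subgroup.mem_center_iff]
  intro g
  have h1 : ⁅z, g⁆ ∈ (⊥ : Subgroup G) := by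
    rw [← hc, lcs_succ']
    exact Subgroup.commutator_mem_commutator hz (Subgroup.mem_top g)
  rw [Subgroup.mem_bot, commutatorElement_eq_one_iff_mul_comm] at h1
  exact h1.symm

lemma mk_mem_center {G : Type*} [Group G] (K : Subgroup G) [K.Normal] {z : G}
    (hz : z ∈ center G) : (QuotientGroup.mk' K) z ∈ center (G ⧸ K) := by
  rw [Subgroup.mem_center_iff]
  intro g
  induction g using QuotientGroup.induction_on with
  | H g =>
    have : (QuotientGroup.mk' K) (g * z) = (QuotientGroup.mk' K) (z * g) := by
      rw [Subgroup.mem_center_iff.mp hz g]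
    simpa using this

/-- Statement (K): central powers force torsion commutators. -/
def KStmt (N : Type u) [Group N] : Prop :=
  ∀ (u v : N) (a : ℕ), 0 < a → u ^ a ∈ center N → IsOfFinOrder ⁅u, v⁆

/-- Statement (T): closures of torsion sets are torsion. -/
def TStmt (N : Type u) [Group N] : Prop :=
  ∀ S : Set N, (∀ s ∈ S, IsOfFinOrder s) → ∀ g ∈ closure S, IsOfFinOrder g

lemma closure_torsion_of_subgroup {N : Type u} [Group N] (Γ : Subgroup N)
    (hT : TStmt ↥Γ) (S : Set N) (hSΓ : S ⊆ (Γ : Set N)) (hS : ∀ s ∈ S, IsOfFinOrder s) :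
    ∀ g ∈ closure S, IsOfFinOrder g := by
  intro g hg
  have hle : closure S ≤ Subgroup.map Γ.subtype (closure ((↑) ⁻¹' S : Set ↥Γ)) := by
    rw [Subgroup.closure_le]
    intro s hs
    exact ⟨⟨s, hSΓ hs⟩, subset_closure hs, rfl⟩
  obtain ⟨z, hz, rfl⟩ := hle hg
  have hzfin : IsOfFinOrder z := by
    refine hT _ ?_ _ hz
    intro t ht
    exact ((Γ.subtype_injective).isOfFinOrder_iff).mp (hS _ ht)
  exact ((Γ.subtype_injective).isOfFinOrder_iff).mpr hzfin

lemma commutator_subgroup_torsion {N : Type u} [Group N]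
    (hTΓ : TStmt ↥((⊤ : Subgroup N).lowerCentralSeries 1)) (M : Subgroup N)
    (hcomm : ∀ p ∈ M, ∀ q ∈ M, IsOfFinOrder ⁅p, q⁆) :
    ∀ g ∈ ⁅M, M⁆, IsOfFinOrder g := by
  intro g hg
  rw [Subgroup.commutator_def] at hg
  refine closure_torsion_of_subgroup _ hTΓ _ ?_ ?_ g hg
  · rintro s ⟨p, hp, q, hq, rfl⟩
    rw [Subgroup.top_lowerCentralSeries_one]
    exact Subgroup.commutator_mem_commutator (mem_top p) (mem_top q)
  · rintro s ⟨p, hp, q, hq, rfl⟩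
    exact hcomm p hp q hq

theorem phi : ∀ (c : ℕ) (N : Type u) [Group N],
    (⊤ : Subgroup N).lowerCentralSeries c = ⊥ → KStmt N ∧ TStmt N := by
  intro c
  induction c with
  | zero =>
    intro N _ hbot
    have htriv : ∀ g : N, g = 1 := by
      intro g
      have hg : g ∈ (⊤ : Subgroup N).lowerCentralSeries 0 := by
        rw [Subgroup.lowerCentralSeries_zero]; exact mem_top g
      rw [hbot, Subgroup.mem_bot] at hg
      exact hg
    constructor
    · intro u v a _ _
      rw [htriv ⁅u, v⁆]; exact IsOfFinOrder.one
    · intro S _ g _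
      rw [htriv g]; exact IsOfFinOrder.one
  | succ c ih =>
    intro N instN hc
    -- the last nontrivial term of the lower central series is central
    have hZc : (⊤ : Subgroup N).lowerCentralSeries c ≤ center N := gamma_le_center hc
    set Z' : Subgroup N := (⊤ : Subgroup N).lowerCentralSeries c with hZ'def
    let π : N →* N ⧸ Z' := QuotientGroup.mk' Z'
    have hπsurj : Function.Surjective π := QuotientGroup.mk'_surjective Z'
    have hkerπ : ∀ z : N, π z = 1 ↔ z ∈ Z' := fun z => QuotientGroup.eq_one_iff z
    -- the quotient has class ≤ c
    have hQc : (⊤ : Subgroup (N ⧸ Z')).lowerCentralSeries c = ⊥ := by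
      rw [← gamma_map_surj π hπsurj c, Subgroup.map_eq_bot_iff, QuotientGroup.ker_mk']
    obtain ⟨KQ, TQ⟩ := ih (N ⧸ Z') hQc
    -- the derived subgroup has class ≤ c
    set Γ : Subgroup N := (⊤ : Subgroup N).lowerCentralSeries 1 with hΓdef
    have hΓc : (⊤ : Subgroup ↥Γ).lowerCentralSeries c = ⊥ := by
      have h1 := gamma_subtype_shift (G := N) c
      rw [hc, le_bot_iff] at h1
      rw [Subgroup.map_eq_bot_iff, Subgroup.ker_subtype, le_bot_iff] at h1
      exact h1
    obtain ⟨KΓ, TΓ⟩ := ih ↥Γ hΓc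
    -- generic: elements of closures of torsion-mod-Z' sets have a power in Z'
    have hmodZ : ∀ (S : Set N), (∀ s ∈ S, IsOfFinOrder (π s)) →
        ∀ p ∈ closure S, ∃ e : ℕ, 0 < e ∧ p ^ e ∈ Z' := by
      intro S hS p hp
      have him : π p ∈ closure (π '' S) := by
        rw [← MonoidHom.map_closure]
        exact ⟨p, hp, rfl⟩
      have hfin : IsOfFinOrder (π p) := by
        refine TQ _ ?_ _ him
        rintro _ ⟨s, hs, rfl⟩
        exact hS s hs
      obtain ⟨e, he, he1⟩ := isOfFinOrder_iff_pow_eq_one.mp hfin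
      refine ⟨e, he, ?_⟩
      rw [← hkerπ, map_pow]
      exact he1
    -- the key statement K for class c+1
    have hK : KStmt N := by
      intro u v a ha hua
      set t : N := ⁅u, v⁆ with htdef
      -- Step 1: in the quotient, the commutator is torsion
      have h1 : IsOfFinOrder (π t) := by
        have hcent : (π u) ^ a ∈ center (N ⧸ Z') := by
          rw [← map_pow]
          exact mk_mem_center Z' hua
        have := KQ (π u) (π v) a ha hcent
        rwa [htdef, map_commutatorElement]
      obtain ⟨q, hq, hq1⟩ := isOfFinOrder_iff_pow_eq_one.mp h1
      have hsZ : t ^ q ∈ Z' := by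
        rw [← hkerπ, map_pow]
        exact hq1
      set s : N := t ^ q with hsdef
      have hscent : s ∈ center N := hZc hsZ
      -- the conjugates of t by powers of u
      set x : ℕ → N := fun i => u ^ i * t * (u ^ i)⁻¹ with hxdef
      have hxq : ∀ i, x i ^ q = s := by
        intro i
        have h2 : ((MulAut.conj (u ^ i)) t) ^ q = (MulAut.conj (u ^ i)) (t ^ q) :=
          (map_pow (MulAut.conj (u ^ i)) t q).symm
        simp only [MulAut.conj_apply] at h2
        rw [hxdef]
        simp only []
        rw [h2, ← hsdef]
        have h3 := Subgroup.mem_center_iff.mp hscent (u ^ i)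
        rw [h3, mul_assoc, mul_inv_cancel, mul_one]
      -- the subgroup generated by the conjugates
      set L : Subgroup N := closure (Set.range fun i : Fin a => x i) with hLdef
      have hxL : ∀ i, i < a → x i ∈ L := fun i hi => subset_closure ⟨⟨i, hi⟩, rfl⟩
      have htΓ : t ∈ Γ := by
        rw [hΓdef, Subgroup.top_lowerCentralSeries_one]
        exact Subgroup.commutator_mem_commutator (mem_top u) (mem_top v)
      have hLΓ : L ≤ Γ := by
        rw [hLdef, closure_le]
        rintro _ ⟨i, rfl⟩
        exact (Subgroup.lowerCentralSeries_normal (⊤ : Subgroup N) 1).conj_mem t htΓ (u ^ (i : ℕ))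
      -- the chain of commutators ⁅u^k, v⁆ lies in L
      have hrL : ∀ k, k ≤ a → ⁅u ^ k, v⁆ ∈ L := by
        intro k
        induction k with
        | zero =>
          intro _
          have : ⁅u ^ 0, v⁆ = (1 : N) := by
            rw [pow_zero, commutatorElement_one_left]
          rw [this]; exact one_mem L
        | succ k ihk =>
          intro hk1
          have hid : ⁅u ^ (k + 1), v⁆ = x k * ⁅u ^ k, v⁆ := by
            simp only [hxdef, htdef, commutatorElement_def]
            group
          rw [hid]
          exact mul_mem (hxL k (Nat.lt_of_succ_le hk1)) (ihk (Nat.le_of_succ_le hk1))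
      -- abelianization computation: s^a lies in the commutator subgroup of L
      have hsL : s ∈ L := by
        rw [← hxq 0]
        exact pow_mem (hxL 0 ha) q
      have hψ : ∀ z : ↥L, Abelianization.of z = 1 ↔ z ∈ commutator ↥L :=
        fun z => QuotientGroup.eq_one_iff z
      have habel : ∀ k, (hk : k ≤ a) →
          (Abelianization.of (⟨⁅u ^ k, v⁆, hrL k hk⟩ : ↥L)) ^ q =
            (Abelianization.of (⟨s, hsL⟩ : ↥L)) ^ k := by
        intro k
        induction k with
        | zero =>
          intro _
          have h0 : (⟨⁅u ^ 0, v⁆, hrL 0 (Nat.zero_le a)⟩ : ↥L) = 1 := by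
            apply Subtype.ext
            simp [pow_zero, commutatorElement_one_left]
          rw [h0, map_one, one_pow, pow_zero]
        | succ k ihk =>
          intro hk1
          have hk : k ≤ a := Nat.le_of_succ_le hk1
          have hsplit : (⟨⁅u ^ (k + 1), v⁆, hrL (k + 1) hk1⟩ : ↥L) =
              (⟨x k, hxL k (Nat.lt_of_succ_le hk1)⟩ : ↥L) * ⟨⁅u ^ k, v⁆, hrL k hk⟩ := by
            apply Subtype.ext
            show ⁅u ^ (k + 1), v⁆ = x k * ⁅u ^ k, v⁆
            simp only [hxdef, htdef, commutatorElement_def]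
            group
          have hxk : (⟨x k, hxL k (Nat.lt_of_succ_le hk1)⟩ : ↥L) ^ q = ⟨s, hsL⟩ := by
            apply Subtype.ext
            show x k ^ q = s
            exact hxq k
          rw [hsplit, map_mul, mul_pow, ihk hk, ← map_pow, hxk, pow_succ']
      have hra : (⟨⁅u ^ a, v⁆, hrL a le_rfl⟩ : ↥L) = 1 := by
        apply Subtype.ext
        show ⁅u ^ a, v⁆ = 1
        rw [commutatorElement_eq_one_iff_mul_comm]
        exact (Subgroup.mem_center_iff.mp hua v).symm
      have hsa_comm : (⟨s, hsL⟩ : ↥L) ^ a ∈ commutator ↥L := by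
        rw [← hψ, map_pow]
        have := habel a le_rfl
        rw [hra, map_one, one_pow] at this
        exact this.symm
      have hsa : s ^ a ∈ ⁅L, L⁆ := by
        have h4 : s ^ a ∈ Subgroup.map L.subtype (commutator ↥L) :=
          ⟨(⟨s, hsL⟩ : ↥L) ^ a, hsa_comm, rfl⟩
        rwa [_root_.commutator_def, Subgroup.map_commutator, ← MonoidHom.range_eq_map,
          Subgroup.range_subtype] at h4
      -- elements of L are torsion modulo Z'
      have hLtors : ∀ p ∈ L, ∃ e : ℕ, 0 < e ∧ p ^ e ∈ Z' := by
        refine hmodZ _ ?_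
        rintro _ ⟨i, rfl⟩
        rw [isOfFinOrder_iff_pow_eq_one]
        refine ⟨q, hq, ?_⟩
        rw [← map_pow, hxq i, hkerπ]
        exact hsZ
      -- commutators of elements of L are torsion
      have hcommL : ∀ p ∈ L, ∀ r ∈ L, IsOfFinOrder ⁅p, r⁆ := by
        intro p hp r hr
        obtain ⟨e, he, heZ⟩ := hLtors p hp
        have hpΓ : p ∈ Γ := hLΓ hp
        have hrΓ : r ∈ Γ := hLΓ hr
        have hcent : (⟨p, hpΓ⟩ : ↥Γ) ^ e ∈ center ↥Γ := by
          rw [Subgroup.mem_center_iff]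
          intro g
          apply Subtype.ext
          show (g : N) * (((⟨p, hpΓ⟩ : ↥Γ) ^ e : ↥Γ) : N) = (((⟨p, hpΓ⟩ : ↥Γ) ^ e : ↥Γ) : N) * g
          rw [SubgroupClass.coe_pow]
          exact Subgroup.mem_center_iff.mp (hZc heZ) (g : N)
        have h5 := KΓ ⟨p, hpΓ⟩ ⟨r, hrΓ⟩ e he hcent
        have h6 := ((Γ.subtype_injective).isOfFinOrder_iff).mpr h5
        rwa [map_commutatorElement] at h6
      have hJt : ∀ g ∈ ⁅L, L⁆, IsOfFinOrder g :=
        commutator_subgroup_torsion TΓ L hcommL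
      have hst : IsOfFinOrder s := isOfFinOrder_of_pow ha (hJt _ hsa)
      rw [htdef] at hsdef
      exact isOfFinOrder_of_pow hq (hsdef ▸ hst)
    -- the closure statement T for class c+1
    have hT : TStmt N := by
      intro S hS g hg
      set M : Subgroup N := closure S with hMdef
      have hmod : ∀ p ∈ M, ∃ e : ℕ, 0 < e ∧ p ^ e ∈ Z' := by
        refine hmodZ _ ?_
        intro s hs
        exact (π).isOfFinOrder (hS s hs)
      have hcommM : ∀ p ∈ M, ∀ r ∈ M, IsOfFinOrder ⁅p, r⁆ := by
        intro p hp r hr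
        obtain ⟨e, he, heZ⟩ := hmod p hp
        exact hK p r e he (hZc heZ)
      have hJt : ∀ z ∈ ⁅M, M⁆, IsOfFinOrder z :=
        commutator_subgroup_torsion TΓ M hcommM
      -- the abelianization of M is torsion
      have him : IsOfFinOrder (Abelianization.of (⟨g, hg⟩ : ↥M)) := by
        have hle : M ≤ Subgroup.map M.subtype
            ((CommGroup.torsion (Abelianization ↥M)).comap
              (Abelianization.of : ↥M →* Abelianization ↥M)) := by
          rw [hMdef, closure_le]
          intro s hs
          refine ⟨⟨s, subset_closure hs⟩, ?_, rfl⟩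
          rw [SetLike.mem_coe, Subgroup.mem_comap, CommGroup.mem_torsion]
          refine MonoidHom.isOfFinOrder _ ?_
          exact ((M.subtype_injective).isOfFinOrder_iff).mp (by simpa using hS s hs)
        obtain ⟨z, hz, hzeq⟩ := hle hg
        have hz2 : z = ⟨g, hg⟩ := Subtype.ext hzeq
        rw [← hz2]
        rw [SetLike.mem_coe, Subgroup.mem_comap, CommGroup.mem_torsion] at hz
        exact hz
      obtain ⟨r, hr, hr1⟩ := isOfFinOrder_iff_pow_eq_one.mp him
      have hgr : g ^ r ∈ ⁅M, M⁆ := by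
        have h7 : (⟨g, hg⟩ : ↥M) ^ r ∈ commutator ↥M := by
          have h6 : ∀ z : ↥M, Abelianization.of z = 1 ↔ z ∈ _root_.commutator ↥M :=
            fun z => QuotientGroup.eq_one_iff z
          rw [← h6, map_pow]
          exact hr1
        have h8 : g ^ r ∈ Subgroup.map M.subtype (commutator ↥M) :=
          ⟨(⟨g, hg⟩ : ↥M) ^ r, h7, rfl⟩
        rwa [_root_.commutator_def, Subgroup.map_commutator, ← MonoidHom.range_eq_map,
          Subgroup.range_subtype] at h8
      exact isOfFinOrder_of_pow hr (hJt _ hgr)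
    exact ⟨hK, hT⟩

theorem malcev_center {N : Type u} [Group N] (hnil : Group.IsNilpotent N)
    (htf : (∀ g : N, g ≠ 1 → ¬IsOfFinOrder g)) {g : N} {k : ℕ} (hk : 0 < k)
    (hg : g ^ k ∈ Subgroup.center N) : g ∈ Subgroup.center N := by
  obtain ⟨c, hc⟩ := Subgroup.nilpotent_iff_lowerCentralSeries.mp hnil
  rw [Subgroup.mem_center_iff]
  intro v
  have hfin := (phi c N hc).1 g v k hk hg
  have h1 : ⁅g, v⁆ = 1 := by
    by_contra hne
    exact htf _ hne hfin
  rw [commutatorElement_eq_one_iff_mul_comm] at h1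
  exact h1.symm

theorem quotient_center_torsionFree {N : Type u} [Group N] (hnil : Group.IsNilpotent N)
    (htf : (∀ g : N, g ≠ 1 → ¬IsOfFinOrder g)) :
    (∀ g : N ⧸ Subgroup.center N, g ≠ 1 → ¬IsOfFinOrder g) := by
  intro q hq hfin
  obtain ⟨g, rfl⟩ := QuotientGroup.mk_surjective q
  obtain ⟨e, he, he1⟩ := isOfFinOrder_iff_pow_eq_one.mp hfin
  have hge : g ^ e ∈ Subgroup.center N := by
    rw [← QuotientGroup.eq_one_iff]
    exact_mod_cast he1
  exact hq ((QuotientGroup.eq_one_iff g).mpr (malcev_center hnil htf he hge))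

theorem malcev_upper : ∀ (i : ℕ) (N : Type u) [Group N], Group.IsNilpotent N →
    (∀ g : N, g ≠ 1 → ¬IsOfFinOrder g) → ∀ (g : N) (k : ℕ), 0 < k →
    g ^ k ∈ Subgroup.upperCentralSeries N i → g ∈ Subgroup.upperCentralSeries N i := by
  intro i
  induction i with
  | zero =>
    intro N _ _ htf g k hk hg
    rw [Subgroup.upperCentralSeries_zero, Subgroup.mem_bot] at hg ⊢
    by_contra hne
    exact htf g hne (isOfFinOrder_iff_pow_eq_one.mpr ⟨k, hk, hg⟩)
  | succ i ihi =>
    intro N _ hnil htf g k hk hg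
    have hQtf := quotient_center_torsionFree hnil htf
    have hQnil : Group.IsNilpotent (N ⧸ Subgroup.center N) := inferInstance
    have h1 : ((g : N ⧸ Subgroup.center N)) ^ k ∈
        Subgroup.upperCentralSeries (N ⧸ Subgroup.center N) i := by
      rw [← Subgroup.comap_upperCentralSeries_quotient_center i] at hg
      rw [Subgroup.mem_comap] at hg
      exact_mod_cast hg
    have h2 := ihi _ hQnil hQtf _ k hk h1
    rw [← Subgroup.comap_upperCentralSeries_quotient_center i, Subgroup.mem_comap]
    exact h2

theorem malcev_upper_zpow {N : Type u} [Group N] (hnil : Group.IsNilpotent N)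
    (htf : (∀ g : N, g ≠ 1 → ¬IsOfFinOrder g)) {g : N} {n : ℤ} (hn : n ≠ 0) {i : ℕ}
    (hg : g ^ n ∈ Subgroup.upperCentralSeries N i) : g ∈ Subgroup.upperCentralSeries N i := by
  obtain ⟨m, hm⟩ : ∃ m : ℕ, n = (m : ℤ) ∨ n = -(m : ℤ) := by
    rcases Int.natAbs_eq n with h | h
    · exact ⟨n.natAbs, Or.inl h⟩
    · exact ⟨n.natAbs, Or.inr h⟩
  have hm0 : 0 < m := by
    rcases hm with h | h <;> · rw [h] at hn; omega
  have hmem : g ^ m ∈ Subgroup.upperCentralSeries N i := by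
    rcases hm with h | h
    · rw [h] at hg
      rwa [zpow_natCast] at hg
    · rw [h, zpow_neg, zpow_natCast] at hg
      simpa using inv_mem hg
  exact malcev_upper i N hnil htf g m hm0 hmem

end Stmt6Helpers

/-- Two subgroups `H₀` and `H₁` of a group `G` have *disjoint conjugates* if
`g H₀ g⁻¹ ∩ H₁ = {1}` for every `g ∈ G`. -/
def DisjointConjugates {G : Type*} [Group G] (H₀ H₁ : Subgroup G) : Prop :=
  ∀ g : G, ∀ h ∈ H₀, g * h * g⁻¹ ∈ H₁ → h = 1

/-- A group `G` is residually torsion-free nilpotent if every nontrivial element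
survives in some torsion-free nilpotent quotient. -/
def ResiduallyTorsionFreeNilpotent (G : Type*) [Group G] : Prop :=
  ∀ g : G, g ≠ 1 → ∃ (N : Type) (_ : Group N) (f : G →* N),
    Group.IsNilpotent N ∧ (∀ g : N, g ≠ 1 → ¬IsOfFinOrder g) ∧ f g ≠ 1

theorem stmt6 {G : Type*} [Group G] (hG : ResiduallyTorsionFreeNilpotent G)
    (x y : G)
    (hxy : Function.Injective (FreeGroup.lift (![x, y] : Fin 2 → G))) :
    ∃ w ∈ Subgroup.closure ({x, y} : Set G), w ≠ 1 ∧
      DisjointConjugates (Subgroup.zpowers x) (Subgroup.zpowers w) := by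
  classical
  refine ⟨⁅x, y⁆, ?_, ?_, ?_⟩
  · have hx : x ∈ Subgroup.closure ({x, y} : Set G) :=
      Subgroup.subset_closure (by simp)
    have hy : y ∈ Subgroup.closure ({x, y} : Set G) :=
      Subgroup.subset_closure (by simp)
    rw [commutatorElement_def]
    exact mul_mem (mul_mem (mul_mem hx hy) (inv_mem hx)) (inv_mem hy)
  · intro h1
    have hword : (⁅FreeGroup.of (0 : Fin 2), FreeGroup.of (1 : Fin 2)⁆ :
        FreeGroup (Fin 2)) = 1 := by
      apply hxy
      rw [map_commutatorElement, map_one]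
      simp only [FreeGroup.lift_apply_of]
      rw [show (![x, y] : Fin 2 → G) 0 = x from rfl,
        show (![x, y] : Fin 2 → G) 1 = y from rfl]
      exact h1
    have hperm := congrArg
      (FreeGroup.lift (![Equiv.swap (0 : Fin 3) 1, Equiv.swap (1 : Fin 3) 2] :
        Fin 2 → Equiv.Perm (Fin 3))) hword
    rw [map_commutatorElement, map_one] at hperm
    simp only [FreeGroup.lift_apply_of] at hperm
    rw [show (![Equiv.swap (0 : Fin 3) 1, Equiv.swap (1 : Fin 3) 2] :
          Fin 2 → Equiv.Perm (Fin 3)) 0 = Equiv.swap 0 1 from rfl,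
      show (![Equiv.swap (0 : Fin 3) 1, Equiv.swap (1 : Fin 3) 2] :
          Fin 2 → Equiv.Perm (Fin 3)) 1 = Equiv.swap 1 2 from rfl] at hperm
    exact absurd hperm (by decide)
  · intro g h hh hconj
    by_contra hne
    rw [Subgroup.mem_zpowers_iff] at hh hconj
    obtain ⟨n, hn⟩ := hh
    obtain ⟨m, hm⟩ := hconj
    obtain ⟨N, instN, f, hnil, htf, hf1⟩ := hG h hne
    have hn0 : n ≠ 0 := by
      rintro rfl
      exact hne (by rw [← hn, zpow_zero])
    have hfh : f h = (f x) ^ n := by rw [← hn, map_zpow]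
    have hexists : ∃ i, f x ∈ Subgroup.upperCentralSeries N i := by
      obtain ⟨i, hi⟩ := hnil.nilpotent'
      exact ⟨i, by rw [hi]; exact Subgroup.mem_top _⟩
    set i0 := Nat.find hexists with hi0def
    have hi0 : f x ∈ Subgroup.upperCentralSeries N i0 := Nat.find_spec hexists
    have hi0ne : i0 ≠ 0 := by
      intro h0
      rw [h0, Subgroup.upperCentralSeries_zero, Subgroup.mem_bot] at hi0
      exact hf1 (by rw [hfh, hi0, one_zpow])
    obtain ⟨j, hj⟩ : ∃ j, i0 = j + 1 := ⟨i0 - 1, (Nat.succ_pred_eq_of_ne_zero hi0ne).symm⟩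
    have hanotZ : f x ∉ Subgroup.upperCentralSeries N j := Nat.find_min hexists (by omega)
    have hcommZ : f ⁅x, y⁆ ∈ Subgroup.upperCentralSeries N j := by
      rw [map_commutatorElement]
      have h4 := Subgroup.mem_upperCentralSeries_succ_iff.mp (by rw [← hj]; exact hi0) (f y)
      rwa [commutatorElement_def]
    have hconjZ : f g * (f x) ^ n * (f g)⁻¹ ∈ Subgroup.upperCentralSeries N j := by
      have h2 : f (g * h * g⁻¹) = f g * (f x) ^ n * (f g)⁻¹ := by
        rw [map_mul, map_mul, map_inv, hfh]
      rw [← h2, ← hm, map_zpow]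
      exact zpow_mem hcommZ m
    have hanZ : (f x) ^ n ∈ Subgroup.upperCentralSeries N j := by
      have hnormal : (Subgroup.upperCentralSeries N j).Normal := inferInstance
      have h3 := hnormal.conj_mem _ hconjZ (f g)⁻¹
      have h5 : (f g)⁻¹ * (f g * (f x) ^ n * (f g)⁻¹) * ((f g)⁻¹)⁻¹ = (f x) ^ n := by
        group
      rwa [h5] at h3
    exact hanotZ (Stmt6Helpers.malcev_upper_zpow hnil htf hn0 hanZ)
end

section
/- Let L be a simple graph with vertex set V, let S ⊆ V, and let L[S] denote the induced subgraph of L on S (the full subgraph: two vertices of S are adjacent in L[S] if and only if they are adjacent in L). Then the group homomorphism ι : A_{L[S]} → A_L sending the generator corresponding to each s ∈ S to the generator s of A_L is injective. -/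
/-- The commutator relators of the right-angled Artin group of a simple graph `L`:
for each edge `{v, w}` of `L`, the commutator `v * w * v⁻¹ * w⁻¹`. -/
def raagRels {V : Type*} (L : SimpleGraph V) : Set (FreeGroup V) :=
  {r | ∃ v w : V, L.Adj v w ∧
    r = FreeGroup.of v * FreeGroup.of w * (FreeGroup.of v)⁻¹ * (FreeGroup.of w)⁻¹}

/-- The right-angled Artin group associated to a simple graph `L`. -/
abbrev RAAG {V : Type*} (L : SimpleGraph V) : Type _ := PresentedGroup (raagRels L)

lemma raag_comm {V : Type*} {L : SimpleGraph V} {v w : V} (h : L.Adj v w) :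
    (PresentedGroup.of v : RAAG L) * PresentedGroup.of w *
      (PresentedGroup.of v)⁻¹ * (PresentedGroup.of w)⁻¹ = 1 := by
  have hr : (FreeGroup.of v * FreeGroup.of w * (FreeGroup.of v)⁻¹ * (FreeGroup.of w)⁻¹ :
      FreeGroup V) ∈ Subgroup.normalClosure (raagRels L) :=
    Subgroup.subset_normalClosure ⟨v, w, h, rfl⟩
  have := (QuotientGroup.eq_one_iff _).mpr hr
  exact this

theorem stmt9 {V : Type*} (L : SimpleGraph V) (S : Set V)
    (ι : RAAG (L.induce S) →* RAAG L)
    (hι : ∀ s : S, ι (PresentedGroup.of s) = PresentedGroup.of (s : V)) :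
    Function.Injective ι := by
  classical
  set f : V → RAAG (L.induce S) := fun v =>
    if h : v ∈ S then PresentedGroup.of (⟨v, h⟩ : S) else 1 with hf
  have hrels : ∀ r ∈ raagRels L, FreeGroup.lift f r = 1 := by
    rintro r ⟨v, w, hadj, rfl⟩
    simp only [map_mul, map_inv, FreeGroup.lift_apply_of, hf]
    by_cases hv : v ∈ S
    · by_cases hw : w ∈ S
      · simp only [dif_pos hv, dif_pos hw]
        exact raag_comm (by exact hadj : (L.induce S).Adj ⟨v, hv⟩ ⟨w, hw⟩)
      · simp [dif_pos hv, dif_neg hw]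
    · simp [dif_neg hv]
  set ρ : RAAG L →* RAAG (L.induce S) := PresentedGroup.toGroup hrels with hρ
  have hcomp : ρ.comp ι = MonoidHom.id _ := by
    apply PresentedGroup.ext
    intro s
    simp only [MonoidHom.comp_apply, MonoidHom.id_apply, hι s, hρ,
      PresentedGroup.toGroup.of, hf, dif_pos s.2]
  intro x y hxy
  have := congrArg ρ hxy
  have hx := congrFun (congrArg (fun g => g.toFun) hcomp) x
  have hy := congrFun (congrArg (fun g => g.toFun) hcomp) y
  simpa [MonoidHom.comp_apply] using hx.symm.trans (this.trans hy)
end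

section
/- Let k ≥ 3 and let F be the free group on free generators a₀, a₁, …, a_{k-1}. For each i with 2 ≤ i ≤ k-1 define gᵢ = a₀⁻¹ aᵢ a₁⁻¹ a₀ aᵢ⁻¹ a₁. Then the elements g₂, …, g_{k-1} freely generate a free subgroup of F of rank k-2; that is, the unique homomorphism from the free group on k-2 generators to F sending the j-th free generator to g_{j+2} is injective. -/
open FreeGroup

namespace StarProofAux

variable {α : Type*} [DecidableEq α]

lemma reduce_cons_congr (x : α × Bool) {T S : List (α × Bool)}
    (h : FreeGroup.reduce T = FreeGroup.reduce S) :
    FreeGroup.reduce (x :: T) = FreeGroup.reduce (x :: S) := by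
  rw [FreeGroup.reduce.cons, FreeGroup.reduce.cons, h]

lemma reduce_cons_of_head_ne (x : α × Bool) {L : List (α × Bool)}
    (hL : FreeGroup.reduce L = L)
    (h : ∀ M, L ≠ (x.1, !x.2) :: M) :
    FreeGroup.reduce (x :: L) = x :: L := by
  rw [FreeGroup.reduce.cons, hL]
  cases L with
  | nil => rfl
  | cons hd tl =>
    show (if x.1 = hd.1 ∧ x.2 = !hd.2 then tl else x :: hd :: tl) = x :: hd :: tl
    rw [if_neg]
    rintro ⟨h1, h2⟩
    exact h tl (by rw [h1, h2, Bool.not_not])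

lemma reduce_cons_cancel (a : α) (b : Bool) {M : List (α × Bool)}
    (hM : FreeGroup.reduce ((a, b) :: M) = (a, b) :: M) :
    FreeGroup.reduce ((a, !b) :: (a, b) :: M) = M := by
  rw [FreeGroup.reduce.cons, hM]
  dsimp only
  simp

lemma reduce_tail {x : α × Bool} {L : List (α × Bool)}
    (h : FreeGroup.reduce (x :: L) = x :: L) : FreeGroup.reduce L = L := by
  rcases hL : FreeGroup.reduce L with _ | ⟨hd, tl⟩
  · rw [FreeGroup.reduce.cons, hL] at h
    dsimp only at h
    have : L = [] := by simpa using h.symm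
    rw [this]
  · rw [FreeGroup.reduce.cons, hL] at h
    dsimp only at h
    by_cases hc : x.1 = hd.1 ∧ x.2 = !hd.2
    · rw [if_pos hc] at h
      exfalso
      have hlen := FreeGroup.Red.length_le (FreeGroup.reduce.red (L := L))
      rw [hL] at hlen
      rw [h] at hlen
      simp at hlen
    · rw [if_neg hc] at h
      have h2 : L = hd :: tl := by simpa using h.symm
      rw [h2] at hL ⊢

/-- abbreviation for the conjugated-commutator shape -/
def gprod (b c i : α) : FreeGroup α :=
  (FreeGroup.of b)⁻¹ * FreeGroup.of i * (FreeGroup.of c)⁻¹ * FreeGroup.of b *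
    (FreeGroup.of i)⁻¹ * FreeGroup.of c

lemma gprod_mul_eq_mk (b c i : α) (w : FreeGroup α) :
    gprod b c i * w =
      FreeGroup.mk ((b, false) :: (i, true) :: (c, false) :: (b, true) :: (i, false) ::
        (c, true) :: w.toWord) := by
  conv_lhs => rw [← FreeGroup.mk_toWord (x := w)]
  show (FreeGroup.mk [(b,true)])⁻¹ * FreeGroup.mk [(i,true)] * (FreeGroup.mk [(c,true)])⁻¹ *
      FreeGroup.mk [(b,true)] * (FreeGroup.mk [(i,true)])⁻¹ * FreeGroup.mk [(c,true)] *
      FreeGroup.mk w.toWord = _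
  simp [FreeGroup.inv_mk, FreeGroup.mul_mk, FreeGroup.invRev]

lemma key (b c i : α) (hbc : b ≠ c) (hib : i ≠ b) (hic : i ≠ c)
    (w : FreeGroup α)
    (hw : ∀ L', w.toWord ≠ (c, false) :: (i, true) :: L') :
    ∃ L', (gprod b c i * w).toWord = (b, false) :: (i, true) :: L' := by
  have hLred : FreeGroup.reduce w.toWord = w.toWord := FreeGroup.reduce_toWord w
  have htw : (gprod b c i * w).toWord =
      FreeGroup.reduce ((b, false) :: (i, true) :: (c, false) :: (b, true) :: (i, false) ::
        (c, true) :: w.toWord) := by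
    rw [gprod_mul_eq_mk, FreeGroup.toWord_mk]
  by_cases hcase : ∃ M, w.toWord = (c, false) :: M
  · obtain ⟨M, hM⟩ := hcase
    have hMred : FreeGroup.reduce M = M := reduce_tail (x := (c, false)) (hM ▸ hLred)
    have h1 : FreeGroup.reduce ((c, true) :: w.toWord) = FreeGroup.reduce M := by
      rw [hM]
      rw [show ((c, true) : α × Bool) = (c, !false) from rfl]
      rw [reduce_cons_cancel c false (hM ▸ hLred), hMred]
    -- step 2: (i,false)
    have h2r : FreeGroup.reduce ((i, false) :: M) = (i, false) :: M :=
      reduce_cons_of_head_ne _ hMred (by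
        intro N hN
        exact hw N (by rw [hM, hN]; rfl)
    )
    have h2 : FreeGroup.reduce ((i, false) :: (c, true) :: w.toWord) =
        (i, false) :: M := (reduce_cons_congr _ h1).trans h2r
    -- step 3: (b,true)
    have h3r : FreeGroup.reduce ((b, true) :: (i, false) :: M) = (b, true) :: (i, false) :: M :=
      reduce_cons_of_head_ne _ h2r (by rintro N hN; simp at hN; first | exact hib hN.1 | exact hib hN.1.symm)
    have h3 : FreeGroup.reduce ((b, true) :: (i, false) :: (c, true) :: w.toWord) =
        (b, true) :: (i, false) :: M :=
      (reduce_cons_congr _ (h2.trans h2r.symm)).trans h3r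
    -- step 4: (c,false)
    have h4r : FreeGroup.reduce ((c, false) :: (b, true) :: (i, false) :: M) =
        (c, false) :: (b, true) :: (i, false) :: M :=
      reduce_cons_of_head_ne _ h3r (by rintro N hN; simp at hN; first | exact hbc hN.1 | exact hbc hN.1.symm)
    have h4 : FreeGroup.reduce ((c, false) :: (b, true) :: (i, false) :: (c, true) :: w.toWord) =
        (c, false) :: (b, true) :: (i, false) :: M :=
      (reduce_cons_congr _ (h3.trans h3r.symm)).trans h4r
    -- step 5: (i,true)
    have h5r : FreeGroup.reduce ((i, true) :: (c, false) :: (b, true) :: (i, false) :: M) =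
        (i, true) :: (c, false) :: (b, true) :: (i, false) :: M :=
      reduce_cons_of_head_ne _ h4r (by rintro N hN; simp at hN; first | exact hic hN.1 | exact hic hN.1.symm)
    have h5 : FreeGroup.reduce
        ((i, true) :: (c, false) :: (b, true) :: (i, false) :: (c, true) :: w.toWord) =
        (i, true) :: (c, false) :: (b, true) :: (i, false) :: M :=
      (reduce_cons_congr _ (h4.trans h4r.symm)).trans h5r
    -- step 6: (b,false)
    have h6r : FreeGroup.reduce
        ((b, false) :: (i, true) :: (c, false) :: (b, true) :: (i, false) :: M) =
        (b, false) :: (i, true) :: (c, false) :: (b, true) :: (i, false) :: M :=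
      reduce_cons_of_head_ne _ h5r (by rintro N hN; simp at hN; first | exact hib hN.1 | exact hib hN.1.symm)
    have h6 : FreeGroup.reduce ((b, false) :: (i, true) :: (c, false) :: (b, true) ::
        (i, false) :: (c, true) :: w.toWord) =
        (b, false) :: (i, true) :: (c, false) :: (b, true) :: (i, false) :: M :=
      (reduce_cons_congr _ (h5.trans h5r.symm)).trans h6r
    exact ⟨_, htw.trans h6⟩
  · push_neg at hcase
    have h1 : FreeGroup.reduce ((c, true) :: w.toWord) = (c, true) :: w.toWord :=
      reduce_cons_of_head_ne _ hLred (by intro N hN; exact hcase N hN)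
    have h2 : FreeGroup.reduce ((i, false) :: (c, true) :: w.toWord) =
        (i, false) :: (c, true) :: w.toWord :=
      reduce_cons_of_head_ne _ h1 (by rintro N hN; simp at hN; first | exact hic hN.1 | exact hic hN.1.symm)
    have h3 : FreeGroup.reduce ((b, true) :: (i, false) :: (c, true) :: w.toWord) =
        (b, true) :: (i, false) :: (c, true) :: w.toWord :=
      reduce_cons_of_head_ne _ h2 (by rintro N hN; simp at hN; first | exact hib hN.1 | exact hib hN.1.symm)
    have h4 : FreeGroup.reduce ((c, false) :: (b, true) :: (i, false) :: (c, true) :: w.toWord) =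
        (c, false) :: (b, true) :: (i, false) :: (c, true) :: w.toWord :=
      reduce_cons_of_head_ne _ h3 (by rintro N hN; simp at hN; first | exact hbc hN.1 | exact hbc hN.1.symm)
    have h5 : FreeGroup.reduce
        ((i, true) :: (c, false) :: (b, true) :: (i, false) :: (c, true) :: w.toWord) =
        (i, true) :: (c, false) :: (b, true) :: (i, false) :: (c, true) :: w.toWord :=
      reduce_cons_of_head_ne _ h4 (by rintro N hN; simp at hN; first | exact hic hN.1 | exact hic hN.1.symm)
    have h6 := reduce_cons_of_head_ne ((b, false) : α × Bool) h5
      (by rintro N hN; simp at hN; first | exact hib hN.1 | exact hib hN.1.symm)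
    exact ⟨_, htw.trans h6⟩

lemma gprod_inv (b c i : α) : (gprod b c i)⁻¹ = gprod c b i := by
  simp only [gprod]
  group

lemma gprod_pow_toWord (b c i : α) (hbc : b ≠ c) (hib : i ≠ b) (hic : i ≠ c) :
    ∀ n : ℕ, 0 < n → ∃ L, ((gprod b c i) ^ n).toWord = (b, false) :: (i, true) :: L := by
  intro n hn
  induction n with
  | zero => omega
  | succ m ih =>
    rcases Nat.eq_zero_or_pos m with hm | hm
    · subst hm
      rw [pow_one, ← mul_one (gprod b c i)]
      exact key b c i hbc hib hic 1 (by simp)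
    · obtain ⟨L, hL⟩ := ih hm
      rw [pow_succ']
      refine key b c i hbc hib hic _ ?_
      intro L' h
      rw [hL] at h
      simp at h
      exact hbc h.1

lemma gprod_zpow_eq_one (b c i : α) (hbc : b ≠ c) (hib : i ≠ b) (hic : i ≠ c) {n : ℤ}
    (h : gprod b c i ^ n = 1) : n = 0 := by
  by_contra hn
  have hne : ∀ m : ℕ, 0 < m → gprod b c i ^ m ≠ 1 := by
    intro m hm h1
    obtain ⟨L, hL⟩ := gprod_pow_toWord b c i hbc hib hic m hm
    rw [h1] at hL
    simp at hL
  rcases lt_or_gt_of_ne hn with h1 | h1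
  · exact hne (-n).toNat (by omega)
      (by rw [← zpow_natCast, Int.toNat_of_nonneg (by omega), zpow_neg, h, inv_one])
  · exact hne n.toNat (by omega)
      (by rw [← zpow_natCast, Int.toNat_of_nonneg (by omega), h])

end StarProofAux

open StarProofAux

/-- The element `gᵢ = a₀⁻¹ aᵢ a₁⁻¹ a₀ aᵢ⁻¹ a₁` of the free group on `k` generators
`a₀, …, a_{k-1}` (where `a_i = FreeGroup.of i`). -/
def starWord (k : ℕ) (hk : 3 ≤ k) (i : Fin k) : FreeGroup (Fin k) :=
  (FreeGroup.of (⟨0, by omega⟩ : Fin k))⁻¹ * FreeGroup.of i *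
    (FreeGroup.of (⟨1, by omega⟩ : Fin k))⁻¹ * FreeGroup.of (⟨0, by omega⟩ : Fin k) *
    (FreeGroup.of i)⁻¹ * FreeGroup.of (⟨1, by omega⟩ : Fin k)

theorem stmt11 (k : ℕ) (hk : 3 ≤ k) :
    Function.Injective (FreeGroup.lift (fun j : Fin (k - 2) =>
      starWord k hk ⟨(j : ℕ) + 2, by have := j.isLt; omega⟩)) := by
  classical
  set z0 : Fin k := ⟨0, by omega⟩ with hz0
  set z1 : Fin k := ⟨1, by omega⟩ with hz1
  have hz01 : z0 ≠ z1 := by simp [hz0, hz1, Fin.ext_iff]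
  set fj : Fin (k - 2) → Fin k := fun j => ⟨(j : ℕ) + 2, by have := j.isLt; omega⟩ with hfj
  have hfj0 : ∀ j, fj j ≠ z0 := by intro j; simp [hfj, hz0, Fin.ext_iff]
  have hfj1 : ∀ j, fj j ≠ z1 := by intro j; simp [hfj, hz1, Fin.ext_iff]
  have hstar : (fun j : Fin (k - 2) =>
      starWord k hk ⟨(j : ℕ) + 2, by have := j.isLt; omega⟩) =
      fun j => gprod z0 z1 (fj j) := rfl
  rw [hstar]
  by_cases hk4 : 4 ≤ k
  · haveI : Nontrivial (Fin (k - 2)) :=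
      ⟨⟨0, by omega⟩, ⟨1, by omega⟩, by simp [Fin.ext_iff]⟩
    apply FreeGroup.injective_lift_of_ping_pong _
      (fun j => {w : FreeGroup (Fin k) | ∃ L, w.toWord = (z0, false) :: (fj j, true) :: L})
      (fun j => {w : FreeGroup (Fin k) | ∃ L, w.toWord = (z1, false) :: (fj j, true) :: L})
    · -- nonempty
      intro j
      obtain ⟨L, hL⟩ := key z0 z1 (fj j) hz01 (hfj0 j) (hfj1 j) 1 (by simp)
      exact ⟨_, L, hL⟩
    · -- X pairwise disjoint
      intro j1 j2 hne
      rw [Function.onFun, Set.disjoint_left]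
      rintro w ⟨L1, h1⟩ ⟨L2, h2⟩
      rw [h1] at h2
      simp [hfj, Fin.ext_iff] at h2
      exact hne (Fin.ext (by omega))
    · -- Y pairwise disjoint
      intro j1 j2 hne
      rw [Function.onFun, Set.disjoint_left]
      rintro w ⟨L1, h1⟩ ⟨L2, h2⟩
      rw [h1] at h2
      simp [hfj, Fin.ext_iff] at h2
      exact hne (Fin.ext (by omega))
    · -- X vs Y disjoint
      intro j1 j2
      rw [Set.disjoint_left]
      rintro w ⟨L1, h1⟩ ⟨L2, h2⟩
      rw [h1] at h2
      simp [hz0, hz1, Fin.ext_iff] at h2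
    · -- ping
      intro j
      rintro w ⟨v, hv, rfl⟩
      simp only [Set.mem_compl_iff, Set.mem_setOf_eq] at hv
      push_neg at hv
      obtain ⟨L, hL⟩ := key z0 z1 (fj j) hz01 (hfj0 j) (hfj1 j) v hv
      exact ⟨L, hL⟩
    · -- pong
      intro j
      rintro w ⟨v, hv, rfl⟩
      simp only [Set.mem_compl_iff, Set.mem_setOf_eq] at hv
      push_neg at hv
      obtain ⟨L, hL⟩ := key z1 z0 (fj j) hz01.symm (hfj1 j) (hfj0 j) v hv
      refine ⟨L, ?_⟩
      show ((gprod z0 z1 (fj j))⁻¹ * v).toWord = _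
      rw [gprod_inv]
      exact hL
  · -- k = 3
    rw [injective_iff_map_eq_one]
    have hall : ∀ y : FreeGroup (Fin (k - 2)),
        ∃ n : ℤ, y = FreeGroup.of (⟨0, by omega⟩ : Fin (k - 2)) ^ n := by
      intro y
      induction y using FreeGroup.induction_on with
      | C1 => exact ⟨0, by simp⟩
      | of a =>
        exact ⟨1, by
          rw [zpow_one, show (⟨0, by omega⟩ : Fin (k - 2)) = a from by
            have := a.isLt; ext; simp; omega]⟩
      | inv_of a _ =>
        exact ⟨-1, by
          rw [zpow_neg, zpow_one, show (⟨0, by omega⟩ : Fin (k - 2)) = a from by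
            have := a.isLt; ext; simp; omega]⟩
      | mul x y ihx ihy =>
        obtain ⟨n1, rfl⟩ := ihx
        obtain ⟨n2, rfl⟩ := ihy
        exact ⟨n1 + n2, (zpow_add _ _ _).symm⟩
    intro x hx
    obtain ⟨n, rfl⟩ := hall x
    rw [map_zpow, FreeGroup.lift_apply_of] at hx
    rw [gprod_zpow_eq_one z0 z1 _ hz01 (hfj0 _) (hfj1 _) hx, zpow_zero]
end

section
/- Let k ≥ 4 and let F be the free group on free generators a₀, a₁, …, a_{k-1}. For each i with 2 ≤ i ≤ k-1 define gᵢ = a₀⁻¹ aᵢ a₁⁻¹ a₀ aᵢ⁻¹ a₁. Then for all i, j with 2 ≤ i < j ≤ k-1, the cyclic subgroups ⟨gᵢ⟩ and ⟨gⱼ⟩ generated by gᵢ and gⱼ have disjoint conjugates in F. -/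
open DihedralGroup in
private lemma r_zpow' (a m : ℤ) :
    (r (a : ZMod 0) : DihedralGroup 0)^m = r ((m * a : ℤ) : ZMod 0) := by
  have h : ∀ nn : ℕ, (r (a : ZMod 0) : DihedralGroup 0)^nn = r ((nn * a : ℤ) : ZMod 0) := by
    intro nn
    induction nn with
    | zero => simp; rfl
    | succ n ih =>
        rw [pow_succ, ih]
        erw [r_mul_r]
        congr 1
        show ((n : ℤ) * a : ℤ) + a = ((n+1 : ℕ) : ℤ) * a
        push_cast; ring
  cases m with
  | ofNat n => simpa using h n
  | negSucc n =>
      rw [zpow_negSucc, h]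
      have hinv : ∀ b : ℤ, (r (b : ZMod 0) : DihedralGroup 0)⁻¹ = r ((-b : ℤ) : ZMod 0) :=
        fun b => rfl
      rw [hinv]
      congr 1
      show (-(((n+1:ℕ) : ℤ) * a) : ℤ) = (Int.negSucc n) * a
      push_cast [Int.negSucc_eq]; ring

theorem stmt13 (k : ℕ) (hk : 4 ≤ k) (i j : Fin k)
    (hi : 2 ≤ (i : ℕ)) (hij : (i : ℕ) < (j : ℕ)) :
    DisjointConjugates (Subgroup.zpowers (starWord k (by omega) i))
      (Subgroup.zpowers (starWord k (by omega) j)) := by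
  classical
  intro g h hh hc
  set f : Fin k → DihedralGroup 0 := fun x =>
    if x = (⟨1, by omega⟩ : Fin k) ∨ x = j then DihedralGroup.sr 0
    else if x = i then DihedralGroup.r 1 else 1 with hf
  set ψ : FreeGroup (Fin k) →* DihedralGroup 0 := FreeGroup.lift f with hψ
  have hij' : i ≠ j := by intro hij2; rw [hij2] at hij; omega
  have hf0 : f (⟨0, by omega⟩ : Fin k) = 1 := by
    rw [hf]
    have h1 : (⟨0, by omega⟩ : Fin k) ≠ (⟨1, by omega⟩ : Fin k) := by
      simp [Fin.ext_iff]
    have h2 : (⟨0, by omega⟩ : Fin k) ≠ j := by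
      intro hz; apply_fun (Fin.val) at hz; simp at hz; omega
    have h3 : (⟨0, by omega⟩ : Fin k) ≠ i := by
      intro hz; apply_fun (Fin.val) at hz; simp at hz; omega
    simp [h1, h2, h3]
  have hf1 : f (⟨1, by omega⟩ : Fin k) = DihedralGroup.sr 0 := by simp [hf]
  have hfi : f i = DihedralGroup.r 1 := by
    have h1 : i ≠ (⟨1, by omega⟩ : Fin k) := by
      intro hz; apply_fun (Fin.val) at hz; simp at hz; omega
    simp [hf, h1, hij']
  have hfj : f j = DihedralGroup.sr 0 := by
    have h1 : j ≠ (⟨1, by omega⟩ : Fin k) := by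
      intro hz; apply_fun (Fin.val) at hz; simp at hz; omega
    simp [hf, h1]
  have hsrinv : (DihedralGroup.sr (0 : ZMod 0))⁻¹ = DihedralGroup.sr 0 := rfl
  have hrinv : (DihedralGroup.r (1 : ZMod 0))⁻¹ = DihedralGroup.r (-1) := rfl
  have hψj : ψ (starWord k (by omega) j) = 1 := by
    simp only [starWord, map_mul, map_inv, hψ, FreeGroup.lift_apply_of, hf0, hf1, hfj,
      hsrinv, inv_one]
    simp
  have hψi : ψ (starWord k (by omega) i) = DihedralGroup.r ((2 : ℤ) : ZMod 0) := by
    simp only [starWord, map_mul, map_inv, hψ, FreeGroup.lift_apply_of, hf0, hf1, hfi,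
      hsrinv, hrinv, inv_one]
    simp only [one_mul, mul_one, DihedralGroup.r_mul_sr, DihedralGroup.sr_mul_r,
      DihedralGroup.sr_mul_sr]
    norm_num
    rfl
  obtain ⟨m, hm⟩ := hh
  obtain ⟨n, hn⟩ := hc
  have key : ψ h = 1 := by
    have := congrArg ψ hn
    simp only [map_zpow, map_mul, map_inv, hψj, one_zpow] at this
    have h2 : ψ g * ψ h * (ψ g)⁻¹ = 1 := this.symm
    calc ψ h = (ψ g)⁻¹ * (ψ g * ψ h * (ψ g)⁻¹) * ψ g := by group
    _ = (ψ g)⁻¹ * 1 * ψ g := by rw [h2]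
    _ = 1 := by group
  have hm' : ψ h = (DihedralGroup.r ((2:ℤ) : ZMod 0))^m := by
    rw [← hm, map_zpow, hψi]
  rw [hm', r_zpow'] at key
  rw [DihedralGroup.one_def] at key
  have h20 : ((m * 2 : ℤ) : ZMod 0) = ((0 : ℤ) : ZMod 0) := by
    injection key
  have : (m * 2 : ℤ) = 0 := by exact_mod_cast h20
  have hm0 : m = 0 := by omega
  subst hm0
  simpa using hm.symm
end
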